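/- Let X be a finite nonempty set and let C be a choice function on X, i.e. a map assigning to every nonempty subset A ⊆ X a nonempty subset C(A) ⊆ A. Then there exists a finite family of strict total orders ≻₁,…,≻_d on X that Pareto-rationalises C — meaning that for every nonempty A ⊆ X and every o ∈ A, o ∈ C(A) if and only if there is no v ∈ A with v ≻_k o for all k ∈ {1,…,d} — if and only if C satisfies the Chernoff, Expansion, and Aizerman properties. -/

import Mathlib

/-- Any strict partial order extends to a strict total order. -/
lemma exists_strict_total_ext {X : Type*} (Q : X → X → Prop)
    (hirr : ∀ x, ¬ Q x x) (htr : ∀ {x y z}, Q x y → Q y z → Q x z) :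
    ∃ s : X → X → Prop, IsStrictTotalOrder X s ∧ ∀ x y, Q x y → s x y := by
  classical
  haveI : IsPartialOrder X (fun x y => Q x y ∨ x = y) :=
    { refl := fun a => Or.inr rfl
      trans := by
        rintro a b c (h | rfl) (h' | rfl)
        · exact Or.inl (htr h h')
        · exact Or.inl h
        · exact Or.inl h'
        · exact Or.inr rfl
      antisymm := by
        rintro a b (h | rfl) hba
        · rcases hba with h' | rfl
          · exact absurd (htr h h') (hirr a)
          · rfl
        · rfl }
  obtain ⟨s, hs, hrs⟩ := extend_partialOrder (fun x y => Q x y ∨ x = y)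
  refine ⟨fun x y => s x y ∧ x ≠ y, ?_, ?_⟩
  · refine { trichotomous := ?_, irrefl := fun a h => h.2 rfl, trans := ?_ }
    · intro a b hn1 hn2
      rcases eq_or_ne a b with rfl | hab
      · rfl
      · rcases hs.total a b with h | h
        · exact absurd ⟨h, hab⟩ hn1
        · exact absurd ⟨h, hab.symm⟩ hn2
    · rintro a b c ⟨h1, h1'⟩ ⟨h2, h2'⟩
      refine ⟨hs.trans _ _ _ h1 h2, ?_⟩
      rintro rfl
      exact h1' (hs.antisymm _ _ h1 h2)
  · intro x y h
    refine ⟨hrs x y (Or.inl h), ?_⟩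
    rintro rfl
    exact hirr x h

/-- A strict partial order together with one extra compatible pair extends to a strict
total order. -/
lemma exists_strict_total_ext_pair {X : Type*} (Q : X → X → Prop)
    (hirr : ∀ x, ¬ Q x x) (htr : ∀ {x y z}, Q x y → Q y z → Q x z)
    (a b : X) (hab : a ≠ b) (h1 : ¬ Q a b) :
    ∃ s : X → X → Prop, IsStrictTotalOrder X s ∧ (∀ x y, Q x y → s x y) ∧ s b a := by
  set Q' : X → X → Prop :=
    fun x y => Q x y ∨ ((Q x b ∨ x = b) ∧ (Q a y ∨ a = y)) with hQ'
  have hchain : ∀ u : X, (Q a u ∨ a = u) → (Q u b ∨ u = b) → False := by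
    rintro u (ha | rfl) (hb | rfl)
    · exact h1 (htr ha hb)
    · exact h1 ha
    · exact h1 hb
    · exact hab rfl
  have hirr' : ∀ x, ¬ Q' x x := by
    rintro x (h | ⟨hb, ha⟩)
    · exact hirr x h
    · exact hchain x ha hb
  have htr' : ∀ {x y z}, Q' x y → Q' y z → Q' x z := by
    rintro x y z (h | ⟨hb, ha⟩) (h' | ⟨hb', ha'⟩)
    · exact Or.inl (htr h h')
    · refine Or.inr ⟨?_, ha'⟩
      rcases hb' with hb' | rfl
      · exact Or.inl (htr h hb')
      · exact Or.inl h
    · refine Or.inr ⟨hb, ?_⟩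
      rcases ha with ha | rfl
      · exact Or.inl (htr ha h')
      · exact Or.inl h'
    · exact absurd (hchain y ha hb') not_false
  obtain ⟨s, hs, hQs⟩ := exists_strict_total_ext Q' hirr' htr'
  exact ⟨s, hs, fun x y h => hQs x y (Or.inl h),
    hQs b a (Or.inr ⟨Or.inr rfl, Or.inr rfl⟩)⟩

/-- Moulin's theorem: a choice function on a finite set is Pareto-rationalisable by
a finite family of strict total orders iff it satisfies Chernoff, Expansion and
Aizerman. -/
theorem pareto_rationalisable_iff_chernoff_expansion_aizerman
    {X : Type*} [Fintype X] [DecidableEq X] [Nonempty X]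
    (C : Finset X → Finset X)
    (hsub : ∀ A, C A ⊆ A)
    (hne : ∀ A : Finset X, A.Nonempty → (C A).Nonempty) :
    (∃ (d : ℕ) (rel : Fin d → X → X → Prop),
      (∀ k, IsStrictTotalOrder X (rel k)) ∧
      (∀ A : Finset X, A.Nonempty → ∀ o ∈ A,
        (o ∈ C A ↔ ¬ ∃ v ∈ A, ∀ k, rel k v o))) ↔
    ((∀ A A' : Finset X, A' ⊆ A → C A ∩ A' ⊆ C A') ∧
     (∀ A A' : Finset X, C A ∩ C A' ⊆ C (A ∪ A')) ∧
     (∀ A A' : Finset X, C A ⊆ A' → A' ⊆ A → C A' ⊆ C A)) := by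
  classical
  constructor
  · -- Forward direction
    rintro ⟨d, rel, hsto, H⟩
    set D : X → X → Prop := fun v o => ∀ k, rel k v o with hD
    have hDtrans : ∀ {x y z}, D x y → D y z → D x z := by
      intro x y z h1 h2 k
      haveI := hsto k
      exact trans_of (rel k) (h1 k) (h2 k)
    have hDirr : ∀ x, ¬ D x x := by
      intro x hx
      have hxmem : x ∈ ({x} : Finset X) := Finset.mem_singleton_self x
      have hxC : x ∈ C {x} := by
        obtain ⟨w, hw⟩ := hne {x} ⟨x, hxmem⟩
        have := Finset.mem_singleton.1 (hsub _ hw)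
        rwa [this] at hw
      exact (H {x} ⟨x, hxmem⟩ x hxmem).1 hxC ⟨x, hxmem, hx⟩
    refine ⟨?_, ?_, ?_⟩
    · -- Chernoff
      intro A A' hA' x hx
      obtain ⟨hx1, hx2⟩ := Finset.mem_inter.1 hx
      refine (H A' ⟨x, hx2⟩ x hx2).2 ?_
      rintro ⟨v, hv, hvd⟩
      exact (H A ⟨x, hA' hx2⟩ x (hsub A hx1)).1 hx1 ⟨v, hA' hv, hvd⟩
    · -- Expansion
      intro A A' x hx
      obtain ⟨hx1, hx2⟩ := Finset.mem_inter.1 hx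
      have hxA : x ∈ A := hsub A hx1
      have hxU : x ∈ A ∪ A' := Finset.mem_union_left _ hxA
      refine (H (A ∪ A') ⟨x, hxU⟩ x hxU).2 ?_
      rintro ⟨v, hv, hvd⟩
      rcases Finset.mem_union.1 hv with hv | hv
      · exact (H A ⟨x, hxA⟩ x hxA).1 hx1 ⟨v, hv, hvd⟩
      · exact (H A' ⟨x, hsub A' hx2⟩ x (hsub A' hx2)).1 hx2 ⟨v, hv, hvd⟩
    · -- Aizerman
      intro A A' hCA' hA'A x hx
      have hxA' : x ∈ A' := hsub A' hx
      have hxA : x ∈ A := hA'A hxA'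
      refine (H A ⟨x, hxA⟩ x hxA).2 ?_
      rintro ⟨v, hv, hvd⟩
      haveI : IsTrans X D := ⟨fun _ _ _ => hDtrans⟩
      haveI : IsIrrefl X D := ⟨hDirr⟩
      have hwf : WellFounded D := Finite.wellFounded_of_trans_of_irrefl D
      obtain ⟨m, hm, hmmin⟩ := hwf.has_min {u | u ∈ A ∧ D u x} ⟨v, hv, hvd⟩
      obtain ⟨hmA, hmx⟩ := hm
      have hmC : m ∈ C A := by
        refine (H A ⟨x, hxA⟩ m hmA).2 ?_
        rintro ⟨w, hw, hwd⟩
        exact hmmin w ⟨hw, hDtrans hwd hmx⟩ hwd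
      exact (H A' ⟨x, hxA'⟩ x hxA').1 hx ⟨m, hCA' hmC, hmx⟩
  · -- Backward direction
    rintro ⟨hCh, hExp, hAiz⟩
    set P : X → X → Prop := fun x y => y ∉ C {x, y} with hP
    -- basic facts about the base relation
    have hpairC : ∀ x y : X, x ∈ C {x, y} ∨ y ∈ C {x, y} := by
      intro x y
      obtain ⟨w, hw⟩ := hne {x, y} ⟨x, Finset.mem_insert_self x {y}⟩
      rcases Finset.mem_insert.1 (hsub _ hw) with rfl | hw'
      · exact Or.inl hw
      · rw [Finset.mem_singleton.1 hw'] at hw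
        exact Or.inr hw
    have hasym : ∀ x y, P x y → ¬ P y x := by
      intro x y hxy hyx
      rw [hP] at hxy hyx
      rw [Finset.pair_comm y x] at hyx
      rcases hpairC x y with h | h
      · exact hyx h
      · exact hxy h
    have hirr : ∀ x, ¬ P x x := fun x h => hasym x x h h
    -- Chernoff consequence: chosen elements are undominated
    have keyA : ∀ A : Finset X, ∀ o ∈ C A, ∀ v ∈ A, ¬ P v o := by
      intro A o hoC v hv hPvo
      have hoA : o ∈ A := hsub A hoC
      have hss : ({v, o} : Finset X) ⊆ A := by
        intro u hu
        rcases Finset.mem_insert.1 hu with rfl | hu'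
        · exact hv
        · rw [Finset.mem_singleton.1 hu']; exact hoA
      have : o ∈ C {v, o} :=
        hCh A {v, o} hss (Finset.mem_inter.2 ⟨hoC, Finset.mem_insert_of_mem
          (Finset.mem_singleton_self o)⟩)
      exact hPvo this
    -- Expansion consequence: undominated elements are chosen
    have keyB : ∀ A : Finset X, ∀ o ∈ A, (∀ v ∈ A, ¬ P v o) → o ∈ C A := by
      intro A
      induction A using Finset.strongInduction with
      | _ A ih =>
        intro o ho hund
        by_cases hb : ∃ b ∈ A, b ≠ o
        · obtain ⟨b, hbA, hbo⟩ := hb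
          have hoe : o ∈ A.erase b := Finset.mem_erase.2 ⟨hbo.symm, ho⟩
          have h1 : o ∈ C (A.erase b) :=
            ih (A.erase b) (Finset.erase_ssubset hbA) o hoe
              (fun v hv => hund v (Finset.mem_of_mem_erase hv))
          have h2 : o ∈ C {b, o} := not_not.1 (hund b hbA)
          have h3 : o ∈ C (A.erase b ∪ {b, o}) :=
            hExp (A.erase b) {b, o} (Finset.mem_inter.2 ⟨h1, h2⟩)
          have h4 : A.erase b ∪ ({b, o} : Finset X) = A := by
            ext u
            simp only [Finset.mem_union, Finset.mem_erase, Finset.mem_insert,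
              Finset.mem_singleton]
            constructor
            · rintro (⟨_, h⟩ | rfl | rfl)
              · exact h
              · exact hbA
              · exact ho
            · intro hu
              by_cases hub : u = b
              · exact Or.inr (Or.inl hub)
              · exact Or.inl ⟨hub, hu⟩
          rwa [h4] at h3
        · push_neg at hb
          have hAo : A = {o} := by
            apply Finset.Subset.antisymm
            · intro u hu
              rw [Finset.mem_singleton]
              exact hb u hu
            · intro u hu
              rw [Finset.mem_singleton.1 hu]; exact ho
          obtain ⟨w, hw⟩ := hne A ⟨o, ho⟩
          have : w = o := by
            have := hsub A hw
            rw [hAo, Finset.mem_singleton] at this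
            exact this
          rwa [this] at hw
    -- Transitivity of P via Chernoff + Aizerman
    have htr : ∀ {x y z}, P x y → P y z → P x z := by
      intro x y z hxy hyz
      have hxz : x ≠ z := by
        rintro rfl
        exact hasym x y hxy hyz
      have hxy' : x ≠ y := by rintro rfl; exact hirr x hxy
      have hyz' : y ≠ z := by rintro rfl; exact hirr y hyz
      set A : Finset X := {x, y, z} with hA
      have hxA : x ∈ A := Finset.mem_insert_self x {y, z}
      have hyA : y ∈ A := by simp [hA]
      have hzA : z ∈ A := by simp [hA]
      have hCAx : ∀ u ∈ C A, u = x := by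
        intro u hu
        rcases Finset.mem_insert.1 (hsub A hu) with rfl | hu'
        · rfl
        rcases Finset.mem_insert.1 hu' with rfl | hu''
        · exact absurd hxy (keyA A u hu x hxA)
        · rw [Finset.mem_singleton.1 hu''] at hu ⊢
          exact absurd hyz (keyA A z hu y hyA)
      have hsubxz : C A ⊆ {x, z} := by
        intro u hu
        rw [hCAx u hu]
        exact Finset.mem_insert_self x {z}
      have hxzA : ({x, z} : Finset X) ⊆ A := by
        intro u hu
        rcases Finset.mem_insert.1 hu with rfl | hu'
        · exact hxA
        · rw [Finset.mem_singleton.1 hu']; exact hzA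
      have hCxz := hAiz A {x, z} hsubxz hxzA
      intro hzC
      exact hxz (hCAx z (hCxz hzC)).symm
    -- build the family of strict total orders
    have hchoice : ∀ p : X × X, ∃ s : X → X → Prop,
        IsStrictTotalOrder X s ∧ (∀ x y, P x y → s x y) ∧
        (p.1 ≠ p.2 → ¬ P p.1 p.2 → s p.2 p.1) := by
      rintro ⟨a, b⟩
      by_cases h : a ≠ b ∧ ¬ P a b
      · obtain ⟨s, hs1, hs2, hs3⟩ :=
          exists_strict_total_ext_pair P hirr (fun {x y z} => htr) a b h.1 h.2
        exact ⟨s, hs1, hs2, fun _ _ => hs3⟩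
      · obtain ⟨s, hs1, hs2⟩ := exists_strict_total_ext P hirr (fun {x y z} => htr)
        exact ⟨s, hs1, hs2, fun h1 h2 => absurd ⟨h1, h2⟩ h⟩
    choose s hs1 hs2 hs3 using hchoice
    have e : Fin (Fintype.card (X × X)) ≃ X × X := (Fintype.equivFin (X × X)).symm
    have hcard : 0 < Fintype.card (X × X) := Fintype.card_pos
    refine ⟨Fintype.card (X × X), fun k => s (e k), fun k => hs1 (e k), ?_⟩
    intro A hA o hoA
    constructor
    · intro hoC
      rintro ⟨v, hv, hdom⟩
      have hnP : ¬ P v o := keyA A o hoC v hv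
      by_cases hvo : v = o
      · subst hvo
        haveI := hs1 (e ⟨0, hcard⟩)
        exact irrefl_of (s (e ⟨0, hcard⟩)) v (hdom ⟨0, hcard⟩)
      · have hov : s (v, o) o v := hs3 (v, o) hvo hnP
        have hvo' := hdom (e.symm (v, o))
        simp only [Equiv.apply_symm_apply] at hvo'
        haveI := hs1 (v, o)
        exact absurd hvo' (asymm hov)
    · intro hnd
      refine keyB A o hoA ?_
      intro v hv hPvo
      exact hnd ⟨v, hv, fun k => hs2 (e k) v o hPvo⟩
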